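/- Let p be an odd prime and w ∈ V_5. Then #{ [q] ∈ P(V_2^*) : q² is apolar to w } − #{ ([ℓ₁],[ℓ₂]) ∈ P(V_1^*)×P(V_1^*) : ℓ₁²ℓ₂² is apolar to w } = − Σ χ(Disc(f)), where the sum is over all classes [f] ∈ P(V_2^*) with f² apolar to w. -/

import Mathlib

open Finset

/-- Multiplication of binary forms encoded by coefficient tuples: a binary form
`∑ i, f i • x^(a-i) * y^i` of degree `a` is encoded as the tuple `f : Fin (a+1) → k`,
and multiplication of forms is convolution of coefficient tuples. -/
def formMul {k : Type*} [CommRing k] {a b : ℕ} (f : Fin (a + 1) → k)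
    (g : Fin (b + 1) → k) : Fin (a + b + 1) → k :=
  fun i => ∑ q : Fin (a + 1) × Fin (b + 1),
    if (q.1 : ℕ) + (q.2 : ℕ) = (i : ℕ) then f q.1 * g q.2 else 0

/-- The pairing `(w, v) = ∑ i, w i * v i` between `V_n` and `V_n^*`. -/
def pair {k : Type*} [CommRing k] {n : ℕ} (w v : Fin (n + 1) → k) : k :=
  ∑ i, w i * v i

/-- The discriminant of a binary quadratic form `f₀x² + f₁xy + f₂y²`. -/
def disc {k : Type*} [CommRing k] (f : Fin 3 → k) : k := f 1 ^ 2 - 4 * f 0 * f 2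

section ToPoly
open Finset Polynomial
noncomputable def toPoly {k : Type*} [CommRing k] {a : ℕ} (f : Fin (a + 1) → k) : Polynomial k :=
  ∑ i : Fin (a + 1), Polynomial.C (f i) * Polynomial.X ^ (i : ℕ)

lemma toPoly_coeff {k : Type*} [CommRing k] {a : ℕ} (f : Fin (a + 1) → k) (j : Fin (a + 1)) :
    (toPoly f).coeff (j : ℕ) = f j := by
  rw [toPoly, Polynomial.finset_sum_coeff]
  rw [Finset.sum_eq_single j]
  · simp
  · intro i _ hij
    simp only [coeff_C_mul, coeff_X_pow]
    rw [if_neg (by simpa [Fin.val_eq_val] using (Ne.symm hij)), mul_zero]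
  · simp

lemma toPoly_eq_zero_iff {k : Type*} [CommRing k] {a : ℕ} (f : Fin (a + 1) → k) :
    toPoly f = 0 ↔ f = 0 := by
  constructor
  · intro h
    funext j
    have := toPoly_coeff f j
    rw [h] at this
    simpa using this.symm
  · rintro rfl
    simp [toPoly]

lemma toPoly_injective {k : Type*} [CommRing k] {a : ℕ} (f g : Fin (a + 1) → k)
    (h : toPoly f = toPoly g) : f = g := by
  funext j
  rw [← toPoly_coeff f j, ← toPoly_coeff g j, h]

lemma toPoly_formMul {k : Type*} [CommRing k] {a b : ℕ} (f : Fin (a + 1) → k)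
    (g : Fin (b + 1) → k) : toPoly (formMul f g) = toPoly f * toPoly g := by
  rw [toPoly, toPoly, toPoly, Finset.sum_mul_sum]
  simp only [formMul, map_sum, Finset.sum_mul, apply_ite Polynomial.C, map_zero, map_mul,
    ite_mul, zero_mul]
  refine Eq.trans (Finset.sum_comm (s := (Finset.univ : Finset (Fin (a + b + 1))))
    (t := (Finset.univ : Finset (Fin (a + 1) × Fin (b + 1))))
    (f := fun x x_1 => if (x_1.1 : ℕ) + (x_1.2 : ℕ) = (x : ℕ) then
      Polynomial.C (f x_1.1) * Polynomial.C (g x_1.2) * Polynomial.X ^ (x : ℕ) else 0)) ?_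
  rw [Fintype.sum_prod_type]
  refine Finset.sum_congr rfl fun i _ => Finset.sum_congr rfl fun j _ => ?_
  rw [Finset.sum_eq_single (⟨(i : ℕ) + (j : ℕ), by omega⟩ : Fin (a + b + 1))]
  · rw [if_pos rfl]
    ring
  · intro c _ hc
    rw [if_neg]
    intro hh
    exact hc (by ext; simp [← hh])
  · simp

end ToPoly

section Helpers
open Finset Polynomial Projectivization

variable {k : Type*} [Field k]

lemma formMul_ne_zero {a b : ℕ} {f : Fin (a + 1) → k} {g : Fin (b + 1) → k}
    (hf : f ≠ 0) (hg : g ≠ 0) : formMul f g ≠ 0 := by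
  intro h
  have := toPoly_formMul f g
  rw [h, (toPoly_eq_zero_iff _).2 rfl] at this
  rcases mul_eq_zero.1 this.symm with h' | h'
  · exact hf ((toPoly_eq_zero_iff _).1 h')
  · exact hg ((toPoly_eq_zero_iff _).1 h')

lemma formMul_smul_left {a b : ℕ} (c : k) (f : Fin (a + 1) → k) (g : Fin (b + 1) → k) :
    formMul (c • f) g = c • formMul f g := by
  funext i
  simp only [formMul, Pi.smul_apply, smul_eq_mul, Finset.mul_sum, mul_ite, mul_zero, mul_assoc]

lemma formMul_smul_right {a b : ℕ} (c : k) (f : Fin (a + 1) → k) (g : Fin (b + 1) → k) :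
    formMul f (c • g) = c • formMul f g := by
  funext i
  simp only [formMul, Pi.smul_apply, smul_eq_mul, Finset.mul_sum, mul_ite, mul_zero]
  exact Finset.sum_congr rfl fun q _ => by rw [mul_left_comm]

lemma pair_smul {n : ℕ} (w : Fin (n + 1) → k) (c : k) (v : Fin (n + 1) → k) :
    pair w (c • v) = c * pair w v := by
  simp only [pair, Pi.smul_apply, smul_eq_mul, Finset.mul_sum]
  exact Finset.sum_congr rfl fun i _ => by ring

instance {K V : Type*} [DivisionRing K] [AddCommGroup V] [Module K V] [Finite V] :
    Finite (Projectivization K V) :=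
  Quotient.finite _

/-- The linear form `x + t y`. -/
def ell (t : k) : Fin 2 → k := ![1, t]

/-- The linear form `y`. -/
def linf : Fin 2 → k := ![0, 1]

lemma ell_ne_zero (t : k) : ell t ≠ 0 := by
  intro h
  have := congrFun h 0
  simp [ell] at this

lemma linf_ne_zero : (linf : Fin 2 → k) ≠ 0 := by
  intro h
  have := congrFun h 1
  simp [linf] at this

lemma formMul_two (u v : Fin 2 → k) :
    formMul u v = ![u 0 * v 0, u 0 * v 1 + u 1 * v 0, u 1 * v 1] := by
  funext i
  fin_cases i <;>
    simp [formMul, Fintype.sum_prod_type, Fin.sum_univ_succ] <;> ring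

lemma formMul_ell_ell (t1 t2 : k) : formMul (ell t1) (ell t2) = ![1, t1 + t2, t1 * t2] := by
  rw [formMul_two]; simp [ell, add_comm]

lemma formMul_ell_linf (t : k) : formMul (ell t) linf = ![0, 1, t] := by
  rw [formMul_two]; simp [ell, linf]

lemma formMul_linf_ell (t : k) : formMul linf (ell t) = ![0, 1, t] := by
  rw [formMul_two]; simp [ell, linf]

lemma formMul_linf_linf : formMul (linf : Fin 2 → k) linf = ![0, 0, 1] := by
  rw [formMul_two]; simp [linf]

/-- Classification of points of ℙ¹. -/
lemma P1_cases (x : Projectivization k (Fin 2 → k)) :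
    (∃ t : k, x = Projectivization.mk k (ell t) (ell_ne_zero t)) ∨
      x = Projectivization.mk k linf linf_ne_zero := by
  induction x using Projectivization.ind with
  | h v hv =>
    by_cases h0 : v 0 = 0
    · right
      rw [Projectivization.mk_eq_mk_iff']
      have h1 : v 1 ≠ 0 := by
        intro h1
        apply hv
        funext i; fin_cases i <;> simp [h0, h1]
      exact ⟨v 1, by funext i; fin_cases i <;> simp [linf, h0]⟩
    · left
      refine ⟨v 1 / v 0, ?_⟩
      rw [Projectivization.mk_eq_mk_iff']
      exact ⟨v 0, by funext i; fin_cases i <;> simp [ell] <;> field_simp⟩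

lemma mk_ell_inj {t1 t2 : k} (h : Projectivization.mk k (ell t1) (ell_ne_zero t1) =
    Projectivization.mk k (ell t2) (ell_ne_zero t2)) : t1 = t2 := by
  rw [Projectivization.mk_eq_mk_iff'] at h
  obtain ⟨c, hc⟩ := h
  have h0 := congrFun hc 0
  have h1 := congrFun hc 1
  simp [ell] at h0 h1
  rw [← h1, h0, one_mul]

lemma mk_ell_ne_linf (t : k) : Projectivization.mk k (ell t) (ell_ne_zero t) ≠
    Projectivization.mk k linf linf_ne_zero := by
  intro h
  rw [Projectivization.mk_eq_mk_iff'] at h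
  obtain ⟨c, hc⟩ := h
  have h0 := congrFun hc 0
  have h1 := congrFun hc 1
  simp [ell, linf] at h0 h1

end Helpers

section Fiber
open Finset Projectivization
open scoped Classical

variable {k : Type*} [Field k]

/-- The multiplication map ℙ¹ × ℙ¹ → ℙ². -/
noncomputable def mu (z : Projectivization k (Fin 2 → k) × Projectivization k (Fin 2 → k)) :
    Projectivization k (Fin 3 → k) :=
  Projectivization.mk k (formMul z.1.rep z.2.rep)
    (formMul_ne_zero z.1.rep_nonzero z.2.rep_nonzero)

lemma mu_mk (u v : Fin 2 → k) (hu : u ≠ 0) (hv : v ≠ 0) :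
    mu (Projectivization.mk k u hu, Projectivization.mk k v hv) =
      Projectivization.mk k (formMul u v) (formMul_ne_zero hu hv) := by
  obtain ⟨c, hc⟩ := Projectivization.exists_smul_eq_mk_rep k u hu
  obtain ⟨d, hd⟩ := Projectivization.exists_smul_eq_mk_rep k v hv
  rw [mu, Projectivization.mk_eq_mk_iff']
  refine ⟨(c : k) * (d : k), ?_⟩
  show ((c : k) * (d : k)) • formMul u v = formMul _ _
  rw [← hc, ← hd]
  show _ = formMul ((c : k) • u) ((d : k) • v)
  rw [formMul_smul_left, formMul_smul_right, smul_smul]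

lemma mu_eq_mk_iff (u v : Fin 2 → k) (hu : u ≠ 0) (hv : v ≠ 0) (f : Fin 3 → k) (hf : f ≠ 0) :
    mu (Projectivization.mk k u hu, Projectivization.mk k v hv) = Projectivization.mk k f hf ↔
      ∃ c : k, c ≠ 0 ∧ c • f = formMul u v := by
  rw [mu_mk, Projectivization.mk_eq_mk_iff']
  constructor
  · rintro ⟨c, hc⟩
    refine ⟨c, fun h => ?_, hc⟩
    rw [h, zero_smul] at hc
    exact formMul_ne_zero hu hv hc.symm
  · rintro ⟨c, _, hc⟩
    exact ⟨c, hc⟩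

/-- `val1 x` recovers `t` from `x = [x + t y]`. -/
noncomputable def val1 (x : Projectivization k (Fin 2 → k)) : k := x.rep 1 / x.rep 0

lemma val1_ell (t : k) : val1 (Projectivization.mk k (ell t) (ell_ne_zero t)) = t := by
  obtain ⟨c, hc⟩ := Projectivization.exists_smul_eq_mk_rep k (ell t) (ell_ne_zero t)
  rw [val1, ← hc]
  have hc0 : (c : k) ≠ 0 := c.ne_zero
  simp only [ell, Pi.smul_apply, Matrix.cons_val_one, Matrix.head_cons, Matrix.cons_val_zero,
    Units.smul_def, smul_eq_mul, mul_one]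
  exact mul_div_cancel_left₀ t hc0

/-- Characterization of the fiber of `mu` over `[f]` when `f 0 ≠ 0`. -/
lemma caseA_mem (f : Fin 3 → k) (hf : f ≠ 0) (h0 : f 0 ≠ 0)
    (z : Projectivization k (Fin 2 → k) × Projectivization k (Fin 2 → k)) :
    mu z = Projectivization.mk k f hf ↔
      ∃ t1 t2 : k, z.1 = Projectivization.mk k (ell t1) (ell_ne_zero t1) ∧
        z.2 = Projectivization.mk k (ell t2) (ell_ne_zero t2) ∧
        t1 + t2 = f 1 / f 0 ∧ t1 * t2 = f 2 / f 0 := by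
  have hz : z = (z.1, z.2) := rfl
  constructor
  · intro hmu
    rcases P1_cases z.1 with ⟨t1, ht1⟩ | ht1 <;> rcases P1_cases z.2 with ⟨t2, ht2⟩ | ht2 <;>
      rw [hz, ht1, ht2, mu_eq_mk_iff] at hmu <;> obtain ⟨c, hc0, hc⟩ := hmu
    · refine ⟨t1, t2, ht1, ht2, ?_, ?_⟩
      · have e0 := congrFun hc 0
        have e1 := congrFun hc 1
        rw [formMul_ell_ell] at e0 e1
        simp only [Pi.smul_apply, smul_eq_mul] at e0 e1
        simp only [Matrix.cons_val_zero, Matrix.cons_val_one, Matrix.head_cons] at e0 e1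
        field_simp
        rw [← e1]
        calc c * f 1 * f 0 = c * f 0 * f 1 := by ring
          _ = f 1 := by rw [e0, one_mul]
      · have e0 := congrFun hc 0
        have e2 := congrFun hc 2
        rw [formMul_ell_ell] at e0 e2
        simp only [Pi.smul_apply, smul_eq_mul] at e0 e2
        simp only [Matrix.cons_val_zero, Matrix.cons_val_one, Matrix.head_cons,
          Matrix.cons_val_two, Matrix.tail_cons] at e0 e2
        field_simp
        rw [← e2]
        calc c * f 2 * f 0 = c * f 0 * f 2 := by ring
          _ = f 2 := by rw [e0, one_mul]
    · exfalso
      have e0 := congrFun hc 0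
      rw [formMul_ell_linf] at e0
      simp only [Pi.smul_apply, smul_eq_mul, Matrix.cons_val_zero] at e0
      exact hc0 (by
        rcases mul_eq_zero.1 e0 with h | h
        · exact h
        · exact absurd h h0)
    · exfalso
      have e0 := congrFun hc 0
      rw [formMul_linf_ell] at e0
      simp only [Pi.smul_apply, smul_eq_mul, Matrix.cons_val_zero] at e0
      exact hc0 (by
        rcases mul_eq_zero.1 e0 with h | h
        · exact h
        · exact absurd h h0)
    · exfalso
      have e0 := congrFun hc 0
      rw [formMul_linf_linf] at e0
      simp only [Pi.smul_apply, smul_eq_mul, Matrix.cons_val_zero] at e0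
      exact hc0 (by
        rcases mul_eq_zero.1 e0 with h | h
        · exact h
        · exact absurd h h0)
  · rintro ⟨t1, t2, ht1, ht2, hsum, hprod⟩
    rw [hz, ht1, ht2, mu_eq_mk_iff]
    refine ⟨(f 0)⁻¹, inv_ne_zero h0, ?_⟩
    rw [formMul_ell_ell]
    funext i
    fin_cases i
    · show (f 0)⁻¹ * f 0 = 1
      exact inv_mul_cancel₀ h0
    · show (f 0)⁻¹ * f 1 = t1 + t2
      rw [hsum, inv_mul_eq_div]
    · show (f 0)⁻¹ * f 2 = t1 * t2
      rw [hprod, inv_mul_eq_div]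

end Fiber

noncomputable instance {K V : Type*} [DivisionRing K] [AddCommGroup V] [Module K V] [Finite V] :
    Fintype (Projectivization K V) := Fintype.ofFinite _

section Count
open Finset Projectivization
open scoped Classical

variable {k : Type*} [Field k] [Fintype k] [DecidableEq k]

lemma card_roots (hch : ringChar k ≠ 2) (s t0 : k) :
    ((univ.filter (fun t : k => t * t - s * t + t0 = 0)).card : ℤ)
      = quadraticChar k (s ^ 2 - 4 * t0) + 1 := by
  have h2 : (2 : k) ≠ 0 := Ring.two_ne_zero hch
  rw [← quadraticChar_card_sqrts hch (s ^ 2 - 4 * t0)]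
  congr 1
  rw [Set.toFinset_setOf]
  apply Finset.card_bij (fun t _ => 2 * t - s)
  · intro t ht
    simp only [mem_filter, mem_univ, true_and] at ht ⊢
    linear_combination 4 * ht
  · intro t ht t' ht' heq
    have : (2 : k) * t = 2 * t' := by linear_combination heq
    exact mul_left_cancel₀ h2 this
  · intro u hu
    simp only [mem_filter, mem_univ, true_and] at hu
    refine ⟨(u + s) / 2, ?_, ?_⟩
    · simp only [mem_filter, mem_univ, true_and]
      field_simp
      linear_combination hu
    · field_simp
      ring

lemma fiber_card (hch : ringChar k ≠ 2) (f : Fin 3 → k) (hf : f ≠ 0) :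
    ((univ.filter (fun z : Projectivization k (Fin 2 → k) × Projectivization k (Fin 2 → k) =>
      mu z = Projectivization.mk k f hf)).card : ℤ) = 1 + quadraticChar k (disc f) := by
  by_cases h0 : f 0 = 0
  · by_cases h1 : f 1 = 0
    · -- case C : f = (0,0,f2)
      have h2 : f 2 ≠ 0 := by
        intro h2
        apply hf
        funext i; fin_cases i <;> assumption
      have hset : (univ.filter (fun z : Projectivization k (Fin 2 → k) ×
          Projectivization k (Fin 2 → k) => mu z = Projectivization.mk k f hf)) =
          {(Projectivization.mk k linf linf_ne_zero, Projectivization.mk k linf linf_ne_zero)} := by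
        ext z
        simp only [mem_filter, mem_univ, true_and, mem_singleton]
        have hz : z = (z.1, z.2) := rfl
        constructor
        · intro hmu
          rcases P1_cases z.1 with ⟨t1, ht1⟩ | ht1 <;> rcases P1_cases z.2 with ⟨t2, ht2⟩ | ht2 <;>
            rw [hz, ht1, ht2, mu_eq_mk_iff] at hmu <;> obtain ⟨c, hc0, hc⟩ := hmu
          · exact absurd (by
              have e0 := congrFun hc 0
              rw [formMul_ell_ell] at e0
              simp only [Pi.smul_apply, smul_eq_mul, Matrix.cons_val_zero, h0, mul_zero] at e0
              exact e0) (by norm_num)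
          · exact absurd (by
              have e1 := congrFun hc 1
              rw [formMul_ell_linf] at e1
              simp only [Pi.smul_apply, smul_eq_mul, Matrix.cons_val_one, Matrix.head_cons,
                h1, mul_zero] at e1
              exact e1) (by norm_num)
          · exact absurd (by
              have e1 := congrFun hc 1
              rw [formMul_linf_ell] at e1
              simp only [Pi.smul_apply, smul_eq_mul, Matrix.cons_val_one, Matrix.head_cons,
                h1, mul_zero] at e1
              exact e1) (by norm_num)
          · rw [hz, ht1, ht2]
        · intro hzz
          rw [hz, hzz, mu_eq_mk_iff]
          refine ⟨(f 2)⁻¹, inv_ne_zero h2, ?_⟩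
          rw [formMul_linf_linf]
          funext i
          fin_cases i
          · show (f 2)⁻¹ * f 0 = 0
            rw [h0, mul_zero]
          · show (f 2)⁻¹ * f 1 = 0
            rw [h1, mul_zero]
          · show (f 2)⁻¹ * f 2 = 1
            exact inv_mul_cancel₀ h2
      rw [hset, card_singleton]
      have : disc f = 0 := by simp [disc, h0, h1]
      rw [this, quadraticChar_zero]
      norm_num
    · -- case B : f = (0,f1,f2), f1 ≠ 0
      set r : k := f 2 / f 1 with hr
      have hset : (univ.filter (fun z : Projectivization k (Fin 2 → k) ×
          Projectivization k (Fin 2 → k) => mu z = Projectivization.mk k f hf)) =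
          {(Projectivization.mk k linf linf_ne_zero, Projectivization.mk k (ell r) (ell_ne_zero r)),
           (Projectivization.mk k (ell r) (ell_ne_zero r), Projectivization.mk k linf linf_ne_zero)} := by
        ext z
        simp only [mem_filter, mem_univ, true_and, mem_insert, mem_singleton]
        have hz : z = (z.1, z.2) := rfl
        constructor
        · intro hmu
          rcases P1_cases z.1 with ⟨t1, ht1⟩ | ht1 <;> rcases P1_cases z.2 with ⟨t2, ht2⟩ | ht2 <;>
            rw [hz, ht1, ht2, mu_eq_mk_iff] at hmu <;> obtain ⟨c, hc0, hc⟩ := hmu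
          · exact absurd (by
              have e0 := congrFun hc 0
              rw [formMul_ell_ell] at e0
              simp only [Pi.smul_apply, smul_eq_mul, Matrix.cons_val_zero, h0, mul_zero] at e0
              exact e0) (by norm_num)
          · -- (ell t1, linf) : ![0,1,t1] = c • f
            right
            have e1 := congrFun hc 1
            have e2 := congrFun hc 2
            rw [formMul_ell_linf] at e1 e2
            simp only [Pi.smul_apply, smul_eq_mul, Matrix.cons_val_one, Matrix.head_cons,
              Matrix.cons_val_two, Matrix.tail_cons] at e1 e2
            have ht : t1 = r := by
              rw [hr]
              field_simp
              rw [← e2]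
              calc c * f 2 * f 1 = c * f 1 * f 2 := by ring
                _ = f 2 := by rw [e1, Matrix.cons_val_zero, one_mul]
            rw [hz, ht1, ht2, ht]
          · left
            have e1 := congrFun hc 1
            have e2 := congrFun hc 2
            rw [formMul_linf_ell] at e1 e2
            simp only [Pi.smul_apply, smul_eq_mul, Matrix.cons_val_one, Matrix.head_cons,
              Matrix.cons_val_two, Matrix.tail_cons] at e1 e2
            have ht : t2 = r := by
              rw [hr]
              field_simp
              rw [← e2]
              calc c * f 2 * f 1 = c * f 1 * f 2 := by ring
                _ = f 2 := by rw [e1, Matrix.cons_val_zero, one_mul]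
            rw [hz, ht1, ht2, ht]
          · exact absurd (by
              have e2 := congrFun hc 2
              rw [formMul_linf_linf] at e2
              simp only [Pi.smul_apply, smul_eq_mul, Matrix.cons_val_one, Matrix.head_cons,
                Matrix.cons_val_two, Matrix.tail_cons] at e2
              have e1 := congrFun hc 1
              rw [formMul_linf_linf] at e1
              simp only [Pi.smul_apply, smul_eq_mul, Matrix.cons_val_one, Matrix.head_cons,
                Matrix.cons_val_two, Matrix.tail_cons] at e1
              -- e1 : c * f 1 = 0
              rcases mul_eq_zero.1 e1 with h | h
              · exact absurd h hc0
              · exact absurd h h1) (fun h => h)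
        · intro hzz
          rcases hzz with hzz | hzz <;> rw [hz, hzz, mu_eq_mk_iff] <;>
            refine ⟨(f 1)⁻¹, inv_ne_zero h1, ?_⟩
          · rw [formMul_linf_ell]
            funext i
            fin_cases i
            · show (f 1)⁻¹ * f 0 = 0
              rw [h0, mul_zero]
            · show (f 1)⁻¹ * f 1 = 1
              exact inv_mul_cancel₀ h1
            · show (f 1)⁻¹ * f 2 = r
              rw [hr, inv_mul_eq_div]
          · rw [formMul_ell_linf]
            funext i
            fin_cases i
            · show (f 1)⁻¹ * f 0 = 0
              rw [h0, mul_zero]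
            · show (f 1)⁻¹ * f 1 = 1
              exact inv_mul_cancel₀ h1
            · show (f 1)⁻¹ * f 2 = r
              rw [hr, inv_mul_eq_div]
      rw [hset]
      have hne : (Projectivization.mk k linf linf_ne_zero,
          Projectivization.mk k (ell r) (ell_ne_zero r)) ≠
          (Projectivization.mk k (ell r) (ell_ne_zero r),
            Projectivization.mk k linf linf_ne_zero) := by
        intro h
        simp only [Prod.mk.injEq] at h
        exact mk_ell_ne_linf r h.2
      rw [card_insert_of_notMem (by simpa using hne), card_singleton]
      have : disc f = f 1 ^ 2 := by simp [disc, h0]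
      rw [this, quadraticChar_sq_one' h1]
      norm_num
  · -- case A : f 0 ≠ 0
    have hcard : (univ.filter (fun z : Projectivization k (Fin 2 → k) ×
        Projectivization k (Fin 2 → k) => mu z = Projectivization.mk k f hf)).card =
        (univ.filter (fun t : k => t * t - (f 1 / f 0) * t + f 2 / f 0 = 0)).card := by
      apply Finset.card_bij (fun z _ => val1 z.1)
      · intro z hz
        rw [mem_filter] at hz
        obtain ⟨t1, t2, ht1, ht2, hsum, hprod⟩ := (caseA_mem f hf h0 z).1 hz.2
        simp only [mem_filter, mem_univ, true_and]
        rw [ht1, val1_ell]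
        rw [← hsum, ← hprod]
        ring
      · intro z hz z' hz' heq
        rw [mem_filter] at hz hz'
        obtain ⟨t1, t2, ht1, ht2, hsum, hprod⟩ := (caseA_mem f hf h0 z).1 hz.2
        obtain ⟨t1', t2', ht1', ht2', hsum', hprod'⟩ := (caseA_mem f hf h0 z').1 hz'.2
        rw [ht1, val1_ell, ht1', val1_ell] at heq
        have ht2eq : t2 = t2' := by
          have h12 : t1 + t2 = t1' + t2' := by rw [hsum, hsum']
          rw [heq] at h12
          exact add_left_cancel h12
        have hz12 : z = (z.1, z.2) := rfl
        have hz12' : z' = (z'.1, z'.2) := rfl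
        rw [hz12, hz12', ht1, ht2, ht1', ht2', heq, ht2eq]
      · intro t ht
        rw [mem_filter] at ht
        refine ⟨(Projectivization.mk k (ell t) (ell_ne_zero t),
          Projectivization.mk k (ell (f 1 / f 0 - t)) (ell_ne_zero _)), ?_, ?_⟩
        · rw [mem_filter]
          refine ⟨mem_univ _, (caseA_mem f hf h0 _).2 ⟨t, f 1 / f 0 - t, rfl, rfl, by ring, ?_⟩⟩
          linear_combination -ht.2
        · exact val1_ell t
    rw [hcard, card_roots hch]
    have hd : (f 1 / f 0) ^ 2 - 4 * (f 2 / f 0) = disc f * ((f 0)⁻¹) ^ 2 := by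
      rw [disc]
      field_simp
    rw [hd, map_mul, quadraticChar_sq_one' (inv_ne_zero h0), mul_one, add_comm]

end Count

section Main
open Finset Projectivization

variable {k : Type*} [Field k]

lemma formMul_rearrange (l1 l2 : Fin 2 → k) (h : Fin 2 → k) :
    formMul (formMul (formMul l1 l1) (formMul l2 l2)) h
      = formMul (formMul (formMul l1 l2 : Fin 3 → k) (formMul l1 l2 : Fin 3 → k)) h := by
  apply toPoly_injective
  simp only [toPoly_formMul]
  ring

lemma Q_iff (w : Fin 6 → k)
    (z : Projectivization k (Fin 2 → k) × Projectivization k (Fin 2 → k)) :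
    (∃ (l1 l2 : Fin 2 → k) (h1 : l1 ≠ 0) (h2 : l2 ≠ 0),
        Projectivization.mk k l1 h1 = z.1 ∧ Projectivization.mk k l2 h2 = z.2 ∧
        ∀ h : Fin 2 → k,
          pair w (formMul (formMul (formMul l1 l1) (formMul l2 l2)) h) = 0) ↔
    (∃ (q : Fin 3 → k) (hq : q ≠ 0), Projectivization.mk k q hq = mu z ∧
        ∀ h : Fin 2 → k, pair w (formMul (formMul q q) h) = 0) := by
  constructor
  · rintro ⟨l1, l2, h1, h2, e1, e2, hap⟩
    refine ⟨formMul l1 l2, formMul_ne_zero h1 h2, ?_, ?_⟩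
    · have : mu (Projectivization.mk k l1 h1, Projectivization.mk k l2 h2)
          = Projectivization.mk k (formMul l1 l2) (formMul_ne_zero h1 h2) := mu_mk l1 l2 h1 h2
      rw [e1, e2] at this
      rw [← this]
    · intro h
      rw [← formMul_rearrange]
      exact hap h
  · rintro ⟨q, hq, hmk, hap⟩
    refine ⟨z.1.rep, z.2.rep, z.1.rep_nonzero, z.2.rep_nonzero,
      Projectivization.mk_rep z.1, Projectivization.mk_rep z.2, ?_⟩
    have hmu : mu z = Projectivization.mk k (formMul z.1.rep z.2.rep)
        (formMul_ne_zero z.1.rep_nonzero z.2.rep_nonzero) := rfl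
    rw [hmu, Projectivization.mk_eq_mk_iff'] at hmk
    obtain ⟨c, hc⟩ := hmk
    have hc0 : c ≠ 0 := by
      intro h
      rw [h, zero_smul] at hc
      exact hq hc.symm
    intro h
    rw [formMul_rearrange]
    have e : formMul (q : Fin 3 → k) q
        = (c * c) • formMul (formMul z.1.rep z.2.rep : Fin 3 → k) (formMul z.1.rep z.2.rep) := by
      rw [← hc, formMul_smul_left, formMul_smul_right, smul_smul]
    have := hap h
    rw [e, formMul_smul_left, pair_smul] at this
    rcases mul_eq_zero.1 this with h' | h'
    · exact absurd h' (mul_ne_zero hc0 hc0)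
    · exact h'

end Main


open scoped Classical in
/-- For odd `p`, the difference of the two counts `Ñ_{2²,1:w} - Ñ_{1²,1²,1:w}` equals
minus the sum of the Legendre symbols `χ(Disc f)` over classes `[f] ∈ ℙ(V₂^*)` with
`f²` apolar to `w`. -/
theorem stmt11 (p : ℕ) [Fact p.Prime] (hp : p ≠ 2) (w : Fin 6 → ZMod p) :
    (Nat.card {x : Projectivization (ZMod p) (Fin 3 → ZMod p) //
        ∃ (q : Fin 3 → ZMod p) (hq : q ≠ 0), Projectivization.mk (ZMod p) q hq = x ∧
          ∀ h : Fin 2 → ZMod p, pair w (formMul (formMul q q) h) = 0} : ℤ) -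
    (Nat.card {x : Projectivization (ZMod p) (Fin 2 → ZMod p) ×
        Projectivization (ZMod p) (Fin 2 → ZMod p) //
      ∃ (l1 l2 : Fin 2 → ZMod p) (h1 : l1 ≠ 0) (h2 : l2 ≠ 0),
        Projectivization.mk (ZMod p) l1 h1 = x.1 ∧
        Projectivization.mk (ZMod p) l2 h2 = x.2 ∧
        ∀ h : Fin 2 → ZMod p,
          pair w (formMul (formMul (formMul l1 l1) (formMul l2 l2)) h) = 0} : ℤ) =
    - ∑ᶠ x : Projectivization (ZMod p) (Fin 3 → ZMod p),
        if ∃ (f : Fin 3 → ZMod p) (hf : f ≠ 0), Projectivization.mk (ZMod p) f hf = x ∧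
            ∀ h : Fin 2 → ZMod p, pair w (formMul (formMul f f) h) = 0
        then quadraticChar (ZMod p) (disc x.rep) else 0 := by
  have hch : ringChar (ZMod p) ≠ 2 := by
    rw [ZMod.ringChar_zmod_n]
    exact hp
  set cond : Projectivization (ZMod p) (Fin 3 → ZMod p) → Prop := fun x =>
    ∃ (q : Fin 3 → ZMod p) (hq : q ≠ 0), Projectivization.mk (ZMod p) q hq = x ∧
      ∀ h : Fin 2 → ZMod p, pair w (formMul (formMul q q) h) = 0 with hcond
  have hN1 : Nat.card {x : Projectivization (ZMod p) (Fin 3 → ZMod p) // cond x}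
      = (univ.filter cond).card := by
    rw [← Nat.card_eq_finsetCard]
    exact Nat.card_congr (Equiv.subtypeEquivRight (fun x => by simp))
  have hN2 : Nat.card {z : Projectivization (ZMod p) (Fin 2 → ZMod p) ×
      Projectivization (ZMod p) (Fin 2 → ZMod p) //
      ∃ (l1 l2 : Fin 2 → ZMod p) (h1 : l1 ≠ 0) (h2 : l2 ≠ 0),
        Projectivization.mk (ZMod p) l1 h1 = z.1 ∧
        Projectivization.mk (ZMod p) l2 h2 = z.2 ∧
        ∀ h : Fin 2 → ZMod p,
          pair w (formMul (formMul (formMul l1 l1) (formMul l2 l2)) h) = 0}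
      = (univ.filter (fun z => cond (mu z))).card := by
    rw [Nat.card_eq_fintype_card, Fintype.card_subtype]
    congr 1
    apply Finset.filter_congr
    intro z _
    simp only [hcond]
    exact Q_iff w z
  have hfib : (univ.filter (fun z => cond (mu z))).card
      = ∑ s ∈ univ.filter cond, (univ.filter (fun z => mu z = s)).card := by
    rw [Finset.card_eq_sum_card_fiberwise (f := mu) (t := univ.filter cond)
      (fun z hz => by
        rw [mem_coe, mem_filter] at hz ⊢
        exact ⟨mem_univ _, hz.2⟩)]
    refine Finset.sum_congr rfl fun s hs => ?_
    congr 1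
    rw [Finset.filter_filter]
    apply Finset.filter_congr
    intro z _
    rw [mem_filter] at hs
    constructor
    · rintro ⟨_, h⟩; exact h
    · rintro h; exact ⟨by rw [h]; exact hs.2, h⟩
  have hfib2 : ((∑ s ∈ univ.filter cond, (univ.filter (fun z => mu z = s)).card : ℕ) : ℤ)
      = ∑ s ∈ univ.filter cond, (1 + (quadraticChar (ZMod p) (disc s.rep) : ℤ)) := by
    push_cast
    refine Finset.sum_congr rfl fun s _ => ?_
    conv_lhs => rw [show s = Projectivization.mk (ZMod p) s.rep s.rep_nonzero from
      (Projectivization.mk_rep s).symm]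
    exact fiber_card hch s.rep s.rep_nonzero
  have hrhs : ∑ᶠ x : Projectivization (ZMod p) (Fin 3 → ZMod p),
      (if cond x then (quadraticChar (ZMod p) (disc x.rep) : ℤ) else 0)
      = ∑ s ∈ univ.filter cond, (quadraticChar (ZMod p) (disc s.rep) : ℤ) := by
    rw [finsum_eq_sum_of_fintype, Finset.sum_filter]
  rw [hN1, hN2, hfib, hfib2, hrhs]
  rw [Finset.sum_add_distrib]
  simp only [Finset.sum_const, nsmul_eq_mul, mul_one]
  push_cast
  ring
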